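/- arXiv:1806.05878 — 2 statements merged into one kernel-verified Lean document; each statement's English description precedes it below -/
import Mathlib

section
/- Let n ≥ 1, k = 2 (so q = 4 and ζ = i), and let f : 𝔽₂ⁿ → ℤ₄ be a generalized Boolean function with binary digit decomposition f = a₀ + 2a₁. Fix a ∈ 𝔽₂ⁿ, an odd integer m ≥ 1 and an odd integer ℓ ≥ 1. Then |H_f(a)| = 2^{m/2}·ℓ if and only if there exist integers A, B with A² + B² = 2ℓ² such that, for the two component functions f₀ = a₁ and f₁ = a₀ ⊕ a₁, one has W_{f_c}(a) = 2^{(m−1)/2}·(A + (−1)^c B) for c ∈ {0,1}. -/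
open scoped BigOperators

/-- The primitive `q`-th complex root of unity `ζ_q = e^{2πi/q}`. -/
noncomputable def zetaQ (q : ℕ) : ℂ := Complex.exp (2 * Real.pi * Complex.I / q)

/-- The generalized Walsh–Hadamard transform of `f : 𝔽₂ⁿ → ℤ_q`. -/
noncomputable def gWHT {n : ℕ} (q : ℕ) (f : (Fin n → ZMod 2) → ZMod q)
    (u : Fin n → ZMod 2) : ℂ :=
  ∑ x : Fin n → ZMod 2, zetaQ q ^ (f x).val * (-1 : ℂ) ^ (∑ i, (u i * x i).val)

/-- The Walsh–Hadamard transform of a Boolean function `g : 𝔽₂ⁿ → 𝔽₂`. -/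
noncomputable def bWHT {n : ℕ} (g : (Fin n → ZMod 2) → ZMod 2)
    (u : Fin n → ZMod 2) : ℂ :=
  ∑ x : Fin n → ZMod 2, (-1 : ℂ) ^ (g x + ∑ i, u i * x i).val

/-- The `i`-th binary digit `a_i` of a function `f : 𝔽₂ⁿ → ℤ_{2^k}`. -/
def digit {n q : ℕ} (f : (Fin n → ZMod 2) → ZMod q) (i : ℕ)
    (x : Fin n → ZMod 2) : ZMod 2 :=
  (((f x).val / 2 ^ i : ℕ) : ZMod 2)

/-- The component function `f_c = c_0 a_0 ⊕ ⋯ ⊕ c_{k-2} a_{k-2} ⊕ a_{k-1}`. -/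
def comp {n k : ℕ} (f : (Fin n → ZMod 2) → ZMod (2 ^ k)) (c : Fin (k - 1) → ZMod 2)
    (x : Fin n → ZMod 2) : ZMod 2 :=
  (∑ j : Fin (k - 1), c j * digit f (j : ℕ) x) + digit f (k - 1) x

/-- The canonical bijection `ι : 𝔽₂^m → ℤ_{2^m}`. -/
def iotaF {m : ℕ} (d : Fin m → ZMod 2) : ZMod (2 ^ m) :=
  ∑ j : Fin m, ((d j).val : ZMod (2 ^ m)) * 2 ^ (j : ℕ)

/-- The inverse `ι⁻¹ : ℤ_{2^m} → 𝔽₂^m` of the canonical bijection. -/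
def invIota {m : ℕ} (g : ZMod (2 ^ m)) : Fin m → ZMod 2 :=
  fun j => ((g.val / 2 ^ (j : ℕ) : ℕ) : ZMod 2)

-- auxiliary lemmas
section Aux
open Complex

lemma zetaQ_four : zetaQ 4 = I := by
  unfold zetaQ
  rw [show (2 * (Real.pi:ℂ) * I / (4:ℕ) : ℂ) = (↑(Real.pi/2) : ℝ) * I by push_cast; ring]
  rw [Complex.exp_mul_I]
  simp [← Complex.ofReal_cos, ← Complex.ofReal_sin, Real.cos_pi_div_two, Real.sin_pi_div_two]

lemma neg_one_pow_mod (a : ℕ) : (-1:ℂ)^(a % 2) = (-1)^a := by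
  conv_rhs => rw [← Nat.div_add_mod a 2, pow_add, pow_mul]
  norm_num

lemma chi_add (z w : ZMod 2) : (-1:ℂ)^((z+w).val) = (-1)^z.val * (-1)^w.val := by
  rw [ZMod.val_add, neg_one_pow_mod, pow_add]

lemma chi_nat (e : ℕ) : (-1:ℂ)^e = (-1)^(((e : ZMod 2)).val) := by
  rw [ZMod.val_natCast, neg_one_pow_mod]

lemma point (v : ℕ) (hv : v < 4) :
    2 * I^v = (1+I)*(-1:ℂ)^(((v/2 : ℕ) : ZMod 2)).val
      + (1-I)*(-1:ℂ)^((((v:ℕ) : ZMod 2) + ((v/2:ℕ):ZMod 2)).val) := by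
  have h1 : ((1:ZMod 2)).val = 1 := rfl
  have h3 : ((3:ZMod 2)).val = 1 := by decide
  have h4 : ((4:ZMod 2)).val = 0 := by decide
  interval_cases v <;>
    norm_num [ZMod.val_natCast, ZMod.val_add, h1, h3, h4, pow_succ, Complex.I_mul_I] <;>
    ring

lemma comp_eq {n : ℕ} (f : (Fin n → ZMod 2) → ZMod (2^2)) (c : ZMod 2)
    (x : Fin n → ZMod 2) :
    comp f (fun _ => c) x = c * (((f x).val : ℕ) : ZMod 2) + (((f x).val / 2 : ℕ) : ZMod 2) := by
  unfold comp digit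
  rw [show (2:ℕ) - 1 = 1 from rfl, Fin.sum_univ_one]
  norm_num

lemma key {n : ℕ} (f : (Fin n → ZMod 2) → ZMod (2^2)) (a : Fin n → ZMod 2) :
    2 * gWHT (2^2) f a
      = (1+I) * bWHT (comp f (fun _ => (0:ZMod 2))) a
        + (1-I) * bWHT (comp f (fun _ => (1:ZMod 2))) a := by
  unfold gWHT bWHT
  rw [Finset.mul_sum, Finset.mul_sum, Finset.mul_sum, ← Finset.sum_add_distrib]
  apply Finset.sum_congr rfl
  intro x _
  have hv : (f x).val < 4 := (f x).val_lt
  have hS : (∑ i, a i * x i : ZMod 2) = ((∑ i, (a i * x i).val : ℕ) : ZMod 2) := by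
    push_cast [ZMod.natCast_val, ZMod.cast_id]
    rfl
  rw [comp_eq f 0 x, comp_eq f 1 x]
  simp only [zero_mul, zero_add, one_mul]
  rw [chi_add, chi_add, chi_nat (∑ i, (a i * x i).val), ← hS]
  rw [show zetaQ (2^2) = I from zetaQ_four]
  have hpt := point (f x).val hv
  set C := (-1:ℂ)^((∑ i, a i * x i : ZMod 2)).val
  calc 2 * (I ^ (f x).val * C)
      = (2 * I ^ (f x).val) * C := by ring
    _ = ((1+I)*(-1:ℂ)^((((f x).val/2 : ℕ) : ZMod 2)).val
          + (1-I)*(-1:ℂ)^(((((f x).val:ℕ) : ZMod 2) + (((f x).val/2:ℕ):ZMod 2)).val)) * C := by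
        rw [hpt]
    _ = _ := by ring

def intW {n : ℕ} (g : (Fin n → ZMod 2) → ZMod 2) (u : Fin n → ZMod 2) : ℤ :=
  ∑ x : Fin n → ZMod 2, (-1 : ℤ) ^ (g x + ∑ i, u i * x i).val

lemma bWHT_int {n : ℕ} (g : (Fin n → ZMod 2) → ZMod 2) (u : Fin n → ZMod 2) :
    bWHT g u = ((intW g u : ℤ) : ℂ) := by
  unfold bWHT intW
  push_cast
  rfl

lemma nt (s : ℕ) : ∀ x y l : ℤ, Odd l → x^2+y^2 = 2^(2*s)*l^2 →
    (2:ℤ)^s ∣ x + y ∧ (2:ℤ)^s ∣ x - y := by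
  induction s with
  | zero => intro x y l _ _; simp
  | succ s ih =>
    intro x y l hl heq
    have h4 : x^2+y^2 = 4 * (2^(2*s) * l^2) := by
      rw [heq]; ring
    rcases Int.even_or_odd x with ⟨p, rfl⟩ | ⟨p, rfl⟩ <;>
      rcases Int.even_or_odd y with ⟨q, rfl⟩ | ⟨q, rfl⟩
    · -- both even
      have h' : p^2 + q^2 = 2^(2*s) * l^2 := by nlinarith [h4]
      obtain ⟨h1, h2⟩ := ih p q l hl h'
      constructor
      · obtain ⟨k, hk⟩ := h1
        exact ⟨k, by rw [pow_succ]; linarith⟩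
      · obtain ⟨k, hk⟩ := h2
        exact ⟨k, by rw [pow_succ]; linarith⟩
    · exfalso
      have : (4:ℤ) ∣ 4 * (p^2 + q^2 + q) + 1 := by
        refine ⟨2^(2*s)*l^2, ?_⟩; nlinarith [h4]
      omega
    · exfalso
      have : (4:ℤ) ∣ 4 * (p^2 + p + q^2) + 1 := by
        refine ⟨2^(2*s)*l^2, ?_⟩; nlinarith [h4]
      omega
    · exfalso
      have : (4:ℤ) ∣ 4 * (p^2 + p + q^2 + q) + 2 := by
        refine ⟨2^(2*s)*l^2, ?_⟩; nlinarith [h4]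
      omega

end Aux

/-- Theorem 5(iv), `k = 2`: for `m, ℓ` odd, `|H_f(a)| = 2^{m/2}·ℓ` iff
there are integers `A, B` with `A² + B² = 2ℓ²` and
`W_{f_c}(a) = 2^{(m-1)/2}·(A + (−1)^c B)` for `c ∈ {0,1}`, where `f₀ = a₁` and
`f₁ = a₀ ⊕ a₁` are the component functions. -/
theorem stmt6 (n : ℕ) (hn : 1 ≤ n)
    (f : (Fin n → ZMod 2) → ZMod (2 ^ 2)) (a : Fin n → ZMod 2)
    (m ℓ : ℕ) (hm : Odd m) (hm1 : 1 ≤ m) (hℓ : Odd ℓ) (hℓ1 : 1 ≤ ℓ) :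
    ‖gWHT (2 ^ 2) f a‖ = (2 : ℝ) ^ ((m : ℝ) / 2) * ℓ ↔
      ∃ A B : ℤ, A ^ 2 + B ^ 2 = 2 * (ℓ : ℤ) ^ 2 ∧
        ∀ c : ZMod 2,
          bWHT (comp f (fun _ => c)) a =
            (2 : ℂ) ^ ((m - 1) / 2) * ((A : ℂ) + (-1 : ℂ) ^ c.val * (B : ℂ)) := by
  obtain ⟨t, rfl⟩ := hm
  have hdiv : (2*t+1-1)/2 = t := by omega
  set W0 := intW (comp f (fun _ => (0:ZMod 2))) a with hW0def
  set W1 := intW (comp f (fun _ => (1:ZMod 2))) a with hW1def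
  have hb0 : bWHT (comp f (fun _ => (0:ZMod 2))) a = ((W0 : ℤ) : ℂ) := bWHT_int _ _
  have hb1 : bWHT (comp f (fun _ => (1:ZMod 2))) a = ((W1 : ℤ) : ℂ) := bWHT_int _ _
  have hkey : 2 * gWHT (2^2) f a = (1+Complex.I) * W0 + (1-Complex.I) * W1 := by
    rw [key f a, hb0, hb1]
  -- |H|^2 = (W0^2+W1^2)/2
  have habs2 : (‖gWHT (2^2) f a‖)^2 = ((W0^2 + W1^2 : ℤ) : ℝ) / 2 := by
    have h1 : ‖2 * gWHT (2^2) f a‖ ^ 2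
        = Complex.normSq (((W0 + W1 : ℤ) : ℝ) + ((W0 - W1 : ℤ) : ℝ) * Complex.I) := by
      rw [Complex.sq_norm, hkey]
      congr 1
      push_cast
      ring
    rw [Complex.normSq_add_mul_I] at h1
    rw [norm_mul] at h1
    have h2 : ‖(2:ℂ)‖ = 2 := by norm_num
    rw [h2, mul_pow] at h1
    push_cast at h1 ⊢
    nlinarith [h1]
  -- the central iff with integers
  have hnonneg : (0:ℝ) ≤ ‖gWHT (2^2) f a‖ := norm_nonneg _
  have hRpos : (0:ℝ) ≤ (2 : ℝ) ^ (((2*t+1 : ℕ) : ℝ) / 2) * ℓ := by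
    positivity
  have hR2 : ((2 : ℝ) ^ (((2*t+1 : ℕ) : ℝ) / 2) * ℓ)^2 = (2:ℝ)^(2*t+1) * (ℓ:ℝ)^2 := by
    rw [mul_pow]
    congr 1
    rw [← Real.rpow_natCast ((2 : ℝ) ^ (((2*t+1 : ℕ) : ℝ) / 2)) 2,
      ← Real.rpow_mul (by norm_num)]
    rw [show ((2*t+1 : ℕ) : ℝ) / 2 * (2:ℕ) = ((2*t+1 : ℕ) : ℝ) by push_cast; ring]
    rw [Real.rpow_natCast]
  have hiff : ‖gWHT (2^2) f a‖ = (2 : ℝ) ^ (((2*t+1:ℕ) : ℝ) / 2) * ℓ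
      ↔ W0^2 + W1^2 = 2^(2*t+2) * (ℓ:ℤ)^2 := by
    rw [← pow_left_inj₀ hnonneg hRpos (two_ne_zero), habs2, hR2]
    rw [div_eq_iff (by norm_num : (2:ℝ) ≠ 0)]
    have hp : (2:ℝ)^(2*t+2) = 2^(2*t+1)*2 := by ring
    constructor
    · intro h
      have h2 : ((W0^2 + W1^2 : ℤ) : ℝ) = ((2^(2*t+2) * (ℓ:ℤ)^2 : ℤ) : ℝ) := by
        push_cast at h ⊢
        linear_combination h
      exact_mod_cast h2
    · intro h
      have h2 := congrArg (fun z : ℤ => (z:ℝ)) h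
      push_cast at h2 ⊢
      linear_combination h2
  rw [hiff]
  constructor
  · intro hW
    have hl' : Odd (ℓ : ℤ) := (Int.odd_coe_nat ℓ).2 hℓ
    have heq : W0^2 + W1^2 = 2^(2*(t+1)) * (ℓ:ℤ)^2 := by
      rw [hW]; ring_nf
    obtain ⟨hA, hB⟩ := nt (t+1) W0 W1 ℓ hl' heq
    obtain ⟨A, hA⟩ := hA
    obtain ⟨B, hB⟩ := hB
    have h2t : (2:ℤ)^(t+1) = 2 * 2^t := by ring
    have hw0 : W0 = 2^t * (A + B) := by
      have : 2 * W0 = 2 * (2^t * (A+B)) := by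
        rw [h2t] at hA hB
        linarith
      exact mul_left_cancel₀ two_ne_zero this
    have hw1 : W1 = 2^t * (A - B) := by
      have : 2 * W1 = 2 * (2^t * (A-B)) := by
        rw [h2t] at hA hB
        linarith
      exact mul_left_cancel₀ two_ne_zero this
    refine ⟨A, B, ?_, ?_⟩
    · have hc : (2:ℤ)^(2*t+2) * (A^2+B^2) = 2^(2*t+2) * (2 * (ℓ:ℤ)^2) := by
        rw [hw0, hw1] at hW
        linear_combination 2 * hW
      exact mul_left_cancel₀ (pow_ne_zero _ two_ne_zero) hc
    · intro c
      have hcc : ∀ c : ZMod 2, c = 0 ∨ c = 1 := by decide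
      rcases hcc c with rfl | rfl
      · rw [hb0, hdiv, hw0]
        push_cast
        norm_num
      · rw [hb1, hdiv, hw1]
        push_cast
        simp [ZMod.val_one]
        ring
  · rintro ⟨A, B, hAB, hc⟩
    have h0 := hc 0
    have h1 := hc 1
    rw [hb0, hdiv] at h0
    rw [hb1, hdiv] at h1
    simp [ZMod.val_one] at h0 h1
    have hw0 : W0 = 2^t * (A + B) := by
      have : ((W0 : ℤ) : ℂ) = (((2^t * (A+B) : ℤ)) : ℂ) := by
        rw [h0]; push_cast; ring
      exact_mod_cast this
    have hw1 : W1 = 2^t * (A - B) := by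
      have : ((W1 : ℤ) : ℂ) = (((2^t * (A-B) : ℤ)) : ℂ) := by
        rw [h1]; push_cast; ring
      exact_mod_cast this
    rw [hw0, hw1]
    linear_combination (2:ℤ)^(2*t) * 2 * hAB
end

section
/- Let n ≥ 1, k ≥ 2, q = 2^k, let s ≥ 0 be an integer, and let f : 𝔽₂ⁿ → ℤ_q be an s-plateaued generalized Boolean function. Then for every c ∈ 𝔽₂^{k−1} and every u ∈ 𝔽₂ⁿ, |W_{f_c}(u)| ∈ {0, 2^{(n+s)/2}} if n + s is even, and |W_{f_c}(u)| ∈ {0, 2^{(n+s+1)/2}} if n + s is odd; that is, each component f_c is an s-plateaued Boolean function if n + s is even, and an (s+1)-plateaued Boolean function if n + s is odd. -/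
open scoped BigOperators

open Polynomial

lemma hzeta (k : ℕ) : IsPrimitiveRoot (zetaQ (2^k)) (2^k) := by
  simpa [zetaQ] using Complex.isPrimitiveRoot_exp (2^k) (by positivity)

lemma zeta_pow_half {k : ℕ} (hk : 1 ≤ k) : (zetaQ (2^k)) ^ (2^(k-1)) = -1 := by
  have h := hzeta k
  have h2 : (zetaQ (2^k) ^ (2^(k-1))) * (zetaQ (2^k) ^ (2^(k-1))) = 1 := by
    rw [← pow_add]
    have : 2^(k-1) + 2^(k-1) = 2^k := by
      have : 2^(k-1) * 2 = 2^k := by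
        rw [mul_comm, ← pow_succ']; congr 1; omega
      omega
    rw [this, h.pow_eq_one]
  have hne : (zetaQ (2^k)) ^ (2^(k-1)) ≠ 1 := by
    apply h.pow_ne_one_of_pos_of_lt (by positivity)
    exact Nat.pow_lt_pow_right (by norm_num) (by omega)
  rcases mul_self_eq_one_iff.1 h2 with h1 | h1
  · exact absurd h1 hne
  · exact h1

lemma minpoly_zeta {k : ℕ} (hk : 1 ≤ k) :
    minpoly ℚ (zetaQ (2^k)) = X ^ (2^(k-1)) + 1 := by
  have h := hzeta k
  have := (Polynomial.cyclotomic_eq_minpoly_rat h (by positivity)).symm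
  rw [this]
  obtain ⟨k', rfl⟩ : ∃ k', k = k' + 1 := ⟨k - 1, by omega⟩
  rw [Polynomial.cyclotomic_prime_pow_eq_geom_sum Nat.prime_two]
  simp [Finset.sum_range_succ, add_comm]

lemma lin_indep {k : ℕ} (hk : 1 ≤ k) (T : Polynomial ℤ)
    (hdeg : T.degree < (2^(k-1) : ℕ)) (h0 : Polynomial.aeval (zetaQ (2^k)) T = 0) :
    T = 0 := by
  by_contra hT
  have hmap : (T.map (Int.castRingHom ℚ)) ≠ 0 := by
    simpa [Polynomial.map_eq_zero_iff, (Int.cast_injective (α := ℚ))] using hT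
  have haev : Polynomial.aeval (zetaQ (2^k)) (T.map (Int.castRingHom ℚ)) = 0 := by
    have : (Int.castRingHom ℚ) = algebraMap ℤ ℚ := rfl
    rw [this, Polynomial.aeval_map_algebraMap]
    exact h0
  have hdvd := minpoly.dvd ℚ (zetaQ (2^k)) haev
  have hdeg2 : (T.map (Int.castRingHom ℚ)).degree < (2^(k-1) : ℕ) :=
    lt_of_le_of_lt (Polynomial.degree_map_le) hdeg
  have hle := Polynomial.degree_le_of_dvd hdvd hmap
  rw [minpoly_zeta hk] at hle
  have hd : (X ^ (2^(k-1)) + 1 : ℚ[X]).degree = ((2^(k-1) : ℕ) : WithBot ℕ) := by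
    have := Polynomial.degree_X_pow_add_C (R := ℚ) (n := 2^(k-1)) (by positivity) 1
    simpa using this
  rw [hd] at hle
  exact absurd (lt_of_le_of_lt hle hdeg2) (lt_irrefl _)

-- coefficient extraction
lemma coords {k : ℕ} (hk : 1 ≤ k) (MM : ℕ → ℤ)
    (h : ∑ m ∈ Finset.range (2^(k-1)), (MM m : ℂ) * (zetaQ (2^k)) ^ m = 0) :
    ∀ m < 2^(k-1), MM m = 0 := by
  set T : ℤ[X] := ∑ m ∈ Finset.range (2^(k-1)), Polynomial.C (MM m) * X ^ m with hT
  have hcoeff : ∀ m < 2^(k-1), T.coeff m = MM m := by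
    intro m hm
    rw [hT, Polynomial.finset_sum_coeff]
    rw [Finset.sum_eq_single m]
    · simp
    · intro b _ hb
      simp [Polynomial.coeff_C_mul, Polynomial.coeff_X_pow, Ne.symm hb]
    · intro hm'; exact absurd (Finset.mem_range.2 hm) hm'
  have hdeg : T.degree < (2^(k-1) : ℕ) := by
    apply lt_of_le_of_lt (Polynomial.degree_sum_le _ _)
    rw [Finset.sup_lt_iff (by exact_mod_cast WithBot.bot_lt_coe _)]
    intro b hb
    apply lt_of_le_of_lt (Polynomial.degree_C_mul_X_pow_le _ _)
    exact_mod_cast Nat.cast_lt.2 (Finset.mem_range.1 hb)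
  have haev : Polynomial.aeval (zetaQ (2^k)) T = 0 := by
    rw [hT]
    rw [map_sum]
    simpa using h
  have := lin_indep hk T hdeg haev
  intro m hm
  rw [← hcoeff m hm, this, Polynomial.coeff_zero]

section
variable {k : ℕ}

lemma two_pow_split (hk : 1 ≤ k) : 2^k = 2^(k-1) + 2^(k-1) := by
  have : 2^(k-1) * 2 = 2^k := by rw [mul_comm, ← pow_succ']; congr 1; omega
  omega

lemma pow_two_pow_k_eq_one {η : ℂ} (hk : 1 ≤ k) (hη : η ^ (2^(k-1)) = -1) :
    η ^ (2^k) = 1 := by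
  rw [two_pow_split hk, pow_add, hη]; ring

lemma conj_eta {η : ℂ} (hk : 1 ≤ k) (hη : η ^ (2^(k-1)) = -1) :
    (starRingEnd ℂ) η = η ^ (2^k - 1) := by
  have h1 : η ^ (2^k) = 1 := pow_two_pow_k_eq_one hk hη
  have habs : ‖η‖ = 1 := Complex.norm_eq_one_of_pow_eq_one h1 (by positivity)
  have hinv : (starRingEnd ℂ) η = η⁻¹ := by
    rw [← Complex.inv_eq_conj habs]
  rw [hinv]
  have hne : η ≠ 0 := by
    intro h; rw [h] at habs; simp at habs
  field_simp
  calc (1:ℂ) = η ^ (2^k) := h1.symm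
  _ = η ^ (2^k - 1) * η := by rw [← pow_succ]; congr 1; have := Nat.one_le_two_pow (n := k); omega
  _ = η * η ^ (2^k - 1) := mul_comm _ _

/-- conj of an integer-polynomial evaluation -/
lemma conj_aeval (P : ℤ[X]) (x : ℂ) :
    (starRingEnd ℂ) (Polynomial.aeval x P) = Polynomial.aeval ((starRingEnd ℂ) x) P := by
  exact (Polynomial.aeval_algHom_apply ((starRingEnd ℂ).toIntAlgHom) x P).symm

lemma conj_abs_all (hk : 1 ≤ k) (P : ℤ[X]) (c : ℤ)
    (h : (Polynomial.aeval (zetaQ (2^k)) P) * (starRingEnd ℂ) (Polynomial.aeval (zetaQ (2^k)) P) = (c : ℂ)) :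
    ∀ η : ℂ, η ^ (2^(k-1)) = -1 →
      (Polynomial.aeval η P) * (starRingEnd ℂ) (Polynomial.aeval η P) = (c : ℂ) := by
  set Q := 2^(k-1) with hQ
  set R : ℤ[X] := P * P.comp (X ^ (2^k - 1)) with hR
  set D : ℤ[X] := X ^ Q + 1 with hD
  have hmonic : D.Monic := by
    rw [hD]
    have : (1 : ℤ[X]) = C 1 := by simp
    rw [this]
    exact Polynomial.monic_X_pow_add_C (1:ℤ) (by positivity)
  have hDdeg : D.degree = (Q : ℕ) := by
    rw [hD]
    have : (1 : ℤ[X]) = C 1 := by simp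
    rw [this]
    exact Polynomial.degree_X_pow_add_C (by positivity) 1
  set S : ℤ[X] := R %ₘ D with hS
  -- evaluation of R at any η with η^Q = -1
  have keyR : ∀ η : ℂ, η ^ Q = -1 →
      Polynomial.aeval η R = (Polynomial.aeval η P) * (starRingEnd ℂ) (Polynomial.aeval η P) := by
    intro η hη
    rw [hR, map_mul, Polynomial.aeval_comp]
    congr 1
    rw [conj_aeval, conj_eta hk hη]
    congr 1
    simp
  have keyS : ∀ η : ℂ, η ^ Q = -1 → Polynomial.aeval η R = Polynomial.aeval η S := by
    intro η hη
    conv_lhs => rw [← Polynomial.modByMonic_add_div R D]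
    rw [map_add, map_mul]
    have : Polynomial.aeval η D = 0 := by rw [hD]; simp [hη]
    rw [this, ← hS]; ring
  have hzq : (zetaQ (2^k)) ^ Q = -1 := zeta_pow_half hk
  have hSzeta : Polynomial.aeval (zetaQ (2^k)) S = (c : ℂ) := by
    rw [← keyS _ hzq, keyR _ hzq, h]
  -- S = C c
  have hT : S - C c = 0 := by
    apply lin_indep hk
    · apply lt_of_le_of_lt (Polynomial.degree_sub_le _ _)
      rw [max_lt_iff]
      constructor
      · rw [← hDdeg]; exact Polynomial.degree_modByMonic_lt R hmonic
      · apply lt_of_le_of_lt (Polynomial.degree_C_le)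
        exact_mod_cast (by positivity : 0 < 2^(k-1))
    · rw [map_sub, hSzeta]; simp
  have hSC : S = C c := by linear_combination (norm := ring_nf) hT
  intro η hη
  rw [← keyR _ hη, keyS _ hη, hSC]
  simp

end

noncomputable section

def pQ (k : ℕ) : ℤ[X] := X ^ (2^(k-1)) + 1

abbrev Ak (k : ℕ) := AdjoinRoot (pQ k)

def rk (k : ℕ) : Ak k := AdjoinRoot.root (pQ k)

variable {k : ℕ}

lemma pQ_monic (k : ℕ) : (pQ k).Monic := by
  have : (pQ k) = X ^ (2^(k-1)) + C 1 := by simp [pQ]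
  rw [this]
  exact Polynomial.monic_X_pow_add_C (1:ℤ) (by positivity)

lemma r_pow_Q (k : ℕ) : (rk k)^(2^(k-1)) = -1 := by
  have h := AdjoinRoot.mk_self (f := pQ k)
  have h2 : Polynomial.aeval (rk k) (pQ k) = 0 := by
    rw [rk, AdjoinRoot.aeval_eq]; exact h
  simp only [pQ, map_add, map_pow, Polynomial.aeval_X, map_one] at h2
  linear_combination (norm := ring_nf) h2

lemma r_pow_2k (hk : 1 ≤ k) : (rk k)^(2^k) = 1 := by
  rw [two_pow_split hk, pow_add, r_pow_Q]; ring

lemma r_unit : IsUnit (rk k) := by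
  apply IsUnit.of_mul_eq_one (-(rk k)^(2^(k-1) - 1))
  have h : rk k * (rk k)^(2^(k-1) - 1) = (rk k)^(2^(k-1)) := by
    rw [← pow_succ']
    congr 1
    have : 1 ≤ 2^(k-1) := Nat.one_le_two_pow
    omega
  rw [mul_neg, h, r_pow_Q]; ring

def phiA (k : ℕ) : Ak k →+* ℂ :=
  AdjoinRoot.lift (Int.castRingHom ℂ) (if k = 0 then -1 else zetaQ (2^k)) (by
    simp only [pQ, Polynomial.eval₂_add, Polynomial.eval₂_pow, Polynomial.eval₂_X,
      Polynomial.eval₂_one]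
    by_cases h : k = 0
    · subst h; norm_num
    · rw [if_neg h, zeta_pow_half (by omega)]; ring)

lemma phiA_r (hk : 1 ≤ k) : phiA k (rk k) = zetaQ (2^k) := by
  rw [phiA, rk, AdjoinRoot.lift_root, if_neg (by omega)]

lemma phiA_mk (hk : 1 ≤ k) (P : ℤ[X]) :
    phiA k (AdjoinRoot.mk (pQ k) P) = Polynomial.aeval (zetaQ (2^k)) P := by
  rw [phiA, AdjoinRoot.lift_mk, if_neg (by omega)]
  rfl

lemma phiA_inj (hk : 1 ≤ k) : Function.Injective (phiA k) := by
  rw [injective_iff_map_eq_zero]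
  intro a ha
  obtain ⟨P, rfl⟩ := AdjoinRoot.mk_surjective a
  set P' := P %ₘ (pQ k) with hP'
  have hmkeq : AdjoinRoot.mk (pQ k) P = AdjoinRoot.mk (pQ k) P' := by
    rw [AdjoinRoot.mk_eq_mk]
    refine ⟨P /ₘ (pQ k), ?_⟩
    have := Polynomial.modByMonic_add_div P (pQ k)
    rw [← hP'] at this
    linear_combination (norm := ring_nf) -this
  rw [hmkeq] at ha ⊢
  rw [phiA_mk hk] at ha
  have hdeg : P'.degree < ((2^(k-1) : ℕ) : WithBot ℕ) := by
    have h1 := Polynomial.degree_modByMonic_lt P (pQ_monic k)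
    have h2 : (pQ k).degree = ((2^(k-1):ℕ) : WithBot ℕ) := by
      have : (pQ k) = X ^ (2^(k-1)) + C 1 := by simp [pQ]
      rw [this]
      exact Polynomial.degree_X_pow_add_C (by positivity) 1
    rwa [h2] at h1
  rw [lin_indep hk P' hdeg ha]
  simp

lemma Ak_domain (hk : 1 ≤ k) : IsDomain (Ak k) :=
  Function.Injective.isDomain (phiA k) (phiA_inj hk)

lemma intCast_inj_Ak (hk : 1 ≤ k) {King : ℤ} (h : (King : Ak k) = 0) : King = 0 := by
  have : phiA k (King : Ak k) = 0 := by rw [h]; simp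
  rw [map_intCast] at this
  exact_mod_cast this

-- ring hom extensionality
lemma hom_ext {S : Type} [CommRing S] (g₁ g₂ : Ak k →+* S) (h : g₁ (rk k) = g₂ (rk k)) :
    g₁ = g₂ := by
  refine RingHom.ext fun a => ?_
  obtain ⟨P, rfl⟩ := AdjoinRoot.mk_surjective a
  have e : ∀ g : Ak k →+* S, g (AdjoinRoot.mk (pQ k) P) = Polynomial.aeval (g (rk k)) P := by
    intro g
    have := Polynomial.aeval_algHom_apply (g.toIntAlgHom) (rk k) P
    rw [rk, AdjoinRoot.aeval_eq] at this
    exact this.symm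
  rw [e g₁, e g₂, h]

def conjA (k : ℕ) : Ak k →+* Ak k :=
  AdjoinRoot.lift (Int.castRingHom (Ak k)) (-(rk k)^(2^(k-1) - 1)) (by
    simp only [pQ, Polynomial.eval₂_add, Polynomial.eval₂_pow, Polynomial.eval₂_X,
      Polynomial.eval₂_one]
    rcases Nat.lt_or_ge k 2 with h | h
    · have hQ1 : 2^(k-1) = 1 := by interval_cases k <;> rfl
      simp only [hQ1]; norm_num
    · set x := rk k with hx
      set Q := 2^(k-1) with hQ
      have h1 : 1 ≤ Q := Nat.one_le_two_pow
      have hxQ : x ^ Q = -1 := r_pow_Q k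
      have hQeven : Even Q := by
        refine ⟨2^(k-2), ?_⟩
        have := two_pow_split (k := k - 1) (by omega)
        rw [hQ]
        convert this using 3 <;> omega
      have e0 : (Q-1)*Q + Q = Q*Q := by
        have h2 : Q ≤ Q * Q := Nat.le_mul_of_pos_left Q (by omega)
        have h3 : (Q-1)*Q = Q*Q - Q := by rw [Nat.sub_one_mul]
        omega
      have e1 : x^((Q-1)*Q) * x^Q = (x^Q)^Q := by
        rw [← pow_add, ← pow_mul, e0]
      rw [hxQ, hQeven.neg_one_pow] at e1
      have e2 : x^((Q-1)*Q) = -1 := by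
        have hone : ((-1 : Ak k))^Q = 1 := hQeven.neg_one_pow
        linear_combination -e1
      rw [neg_pow, hQeven.neg_one_pow, one_mul, ← pow_mul, e2]
      ring)

lemma conjA_r : conjA k (rk k) = -(rk k)^(2^(k-1) - 1) := by
  rw [conjA]; exact AdjoinRoot.lift_root _

lemma phiA_conjA (hk : 1 ≤ k) (a : Ak k) :
    phiA k (conjA k a) = (starRingEnd ℂ) (phiA k a) := by
  have : (phiA k).comp (conjA k) = (starRingEnd ℂ).comp (phiA k) := by
    apply hom_ext
    simp only [RingHom.comp_apply]
    rw [conjA_r, phiA_r hk, map_neg, map_pow, phiA_r hk]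
    rw [conj_eta hk (zeta_pow_half hk)]
    have h1 : 2^k - 1 = 2^(k-1) + (2^(k-1) - 1) := by
      have := two_pow_split (k := k) hk
      have : 1 ≤ 2^(k-1) := Nat.one_le_two_pow
      omega
    rw [h1, pow_add, zeta_pow_half hk]
    ring
  exact DFunLike.congr_fun this a

lemma conjA_invol (hk : 1 ≤ k) (a : Ak k) : conjA k (conjA k a) = a := by
  apply phiA_inj hk
  rw [phiA_conjA hk, phiA_conjA hk, Complex.conj_conj]



def psi2 (k : ℕ) : Ak k →+* ZMod 2 :=
  AdjoinRoot.lift (Int.castRingHom (ZMod 2)) 1 (by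
    simp only [pQ, Polynomial.eval₂_add, Polynomial.eval₂_pow, Polynomial.eval₂_X,
      Polynomial.eval₂_one, one_pow]
    decide)

lemma psi2_r : psi2 k (rk k) = 1 := by
  rw [psi2]; exact AdjoinRoot.lift_root _

def piA (k : ℕ) : Ak k := 1 - rk k

lemma psi2_pi : psi2 k (piA k) = 0 := by
  rw [piA, map_sub, map_one, psi2_r, sub_self]

lemma psi2_mk (P : ℤ[X]) :
    psi2 k (AdjoinRoot.mk (pQ k) P) = ((P.eval 1 : ℤ) : ZMod 2) := by
  rw [psi2, AdjoinRoot.lift_mk, Polynomial.eval₂_at_one]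
  rfl

lemma pi_dvd_two : piA k ∣ 2 := by
  refine ⟨∑ i ∈ Finset.range (2^(k-1)), (rk k)^i, ?_⟩
  have h := geom_sum_mul (rk k) (2^(k-1))
  rw [r_pow_Q] at h
  have : piA k * ∑ i ∈ Finset.range (2^(k-1)), (rk k)^i
      = -((∑ i ∈ Finset.range (2^(k-1)), (rk k)^i) * (rk k - 1)) := by
    rw [piA]; ring
  rw [this, h]; ring

lemma pi_dvd_of_psi2 (a : Ak k) (h : psi2 k a = 0) : piA k ∣ a := by
  obtain ⟨P, rfl⟩ := AdjoinRoot.mk_surjective a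
  rw [psi2_mk] at h
  have h2 : (2 : ℤ) ∣ P.eval 1 := by
    have := (ZMod.intCast_zmod_eq_zero_iff_dvd (P.eval 1) 2).1 h
    exact_mod_cast this
  obtain ⟨m, hm⟩ := h2
  have hdvd1 : piA k ∣ AdjoinRoot.mk (pQ k) P - ((P.eval 1 : ℤ) : Ak k) := by
    have h3 := Polynomial.X_sub_C_dvd_sub_C_eval (a := (1:ℤ)) (p := P)
    obtain ⟨G, hG⟩ := h3
    refine ⟨-(AdjoinRoot.mk (pQ k) G), ?_⟩
    have := congrArg (AdjoinRoot.mk (pQ k)) hG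
    rw [map_sub, map_mul, map_sub] at this
    simp only [AdjoinRoot.mk_X, AdjoinRoot.mk_C] at this
    rw [piA]
    have hof : ∀ z : ℤ, (AdjoinRoot.of (pQ k)) z = ((z : ℤ) : Ak k) := fun z =>
      eq_intCast (AdjoinRoot.of (pQ k)) z
    rw [hof (P.eval 1), hof 1] at this
    rw [rk]
    push_cast at this ⊢
    linear_combination (norm := ring_nf) this
  have hdvd2 : piA k ∣ ((P.eval 1 : ℤ) : Ak k) := by
    rw [hm]
    push_cast
    exact Dvd.dvd.mul_right (pi_dvd_two) (m : Ak k)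
  have := dvd_add hdvd1 hdvd2
  simpa using this

lemma piA_dvd_iff (a : Ak k) : piA k ∣ a ↔ psi2 k a = 0 := by
  constructor
  · rintro ⟨b, rfl⟩
    rw [map_mul, psi2_pi, zero_mul]
  · exact pi_dvd_of_psi2 a

lemma pi_ne_zero (hk : 1 ≤ k) : piA k ≠ 0 := by
  intro h
  have : phiA k (piA k) = 0 := by rw [h]; simp
  rw [piA, map_sub, map_one, phiA_r hk] at this
  have : zetaQ (2^k) = 1 := by linear_combination (norm := ring_nf) -this
  exact (hzeta k).ne_one (by
    have : (2:ℕ) ≤ 2^k := by calc (2:ℕ) = 2^1 := rfl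
                                 _ ≤ 2^k := Nat.pow_le_pow_right (by norm_num) (by omega)
    omega) this

lemma prime_pi (hk : 1 ≤ k) : Prime (piA k) := by
  refine ⟨pi_ne_zero hk, ?_, ?_⟩
  · intro hu
    have := hu.map (psi2 k)
    rw [psi2_pi] at this
    exact (by simp : ¬ IsUnit (0 : ZMod 2)) this
  · intro a b hab
    rw [piA_dvd_iff] at hab
    rw [map_mul] at hab
    rcases mul_eq_zero.1 hab with h | h
    · exact Or.inl (pi_dvd_of_psi2 a h)
    · exact Or.inr (pi_dvd_of_psi2 b h)

lemma psi2_conjA (a : Ak k) : psi2 k (conjA k a) = psi2 k a := by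
  have : (psi2 k).comp (conjA k) = psi2 k := by
    apply hom_ext
    simp only [RingHom.comp_apply]
    rw [conjA_r, map_neg, map_pow, psi2_r, one_pow]
    decide
  exact DFunLike.congr_fun this a

lemma assoc_gen (d e : ℕ) (hk : 1 ≤ k) (he : Odd e) :
    Associated (1 - (rk k)^d) (1 - (rk k)^(d*e)) := by
  haveI := Ak_domain (k := k) hk
  apply associated_of_dvd_dvd
  · -- 1 - y ∣ 1 - y^e
    have key : (1 - (rk k)^d) ∣ (1 - ((rk k)^d)^e) := by
      refine ⟨∑ i ∈ Finset.range e, ((rk k)^d)^i, ?_⟩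
      have h := geom_sum_mul ((rk k)^d) e
      linear_combination h
    rwa [← pow_mul] at key
  · -- 1 - y^e ∣ 1 - y
    set y := (rk k)^d with hy
    have hcop : Nat.Coprime e (2^k) := by
      apply Nat.Coprime.pow_right
      rw [Nat.coprime_comm]
      rw [Nat.Prime.coprime_iff_not_dvd Nat.prime_two]
      intro h2
      rcases he with ⟨m, hm⟩
      omega
    obtain ⟨b, -, hb⟩ := Nat.exists_mul_mod_eq_one_of_coprime hcop (by
      calc (1:ℕ) < 2 := by norm_num
      _ = 2^1 := rfl
      _ ≤ 2^k := Nat.pow_le_pow_right (by norm_num) (by omega))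
    have hyk : y^(2^k) = 1 := by
      rw [hy, ← pow_mul, mul_comm, pow_mul, r_pow_2k hk, one_pow]
    have hyeb : (y^e)^b = y := by
      rw [← pow_mul]
      have : e * b = 2^k * (e*b / 2^k) + 1 := by
        have := Nat.div_add_mod (e*b) (2^k)
        omega
      rw [this, pow_add, pow_mul, hyk, one_pow, pow_one, one_mul]
    have key : (1 - y^e) ∣ (1 - y) := by
      refine ⟨∑ i ∈ Finset.range b, (y^e)^i, ?_⟩
      have h := geom_sum_mul (y^e) b
      rw [hyeb] at h
      linear_combination h
    rwa [hy, ← pow_mul] at key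

lemma assoc_pow_two (hk : 2 ≤ k) :
    ∀ j, j ≤ k - 1 → Associated ((piA k)^(2^j)) (1 - (rk k)^(2^j)) := by
  intro j
  induction j with
  | zero => intro _; simpa [piA] using Associated.refl _
  | succ j ih =>
    intro hj
    have hj' : j ≤ k - 1 := by omega
    have hstep : (1 - (rk k)^(2^(j+1))) = (1 - (rk k)^(2^j)) * (1 + (rk k)^(2^j)) := by
      have : (rk k)^(2^(j+1)) = ((rk k)^(2^j))^2 := by
        rw [← pow_mul, pow_succ]
      rw [this]; ring
    have hplus : Associated (1 - (rk k)^(2^j)) (1 + (rk k)^(2^j)) := by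
      have he : Odd (1 + 2^(k-1-j)) := by
        refine ⟨2^(k-1-j-1), ?_⟩
        have h1 : 1 ≤ k-1-j := by omega
        have : 2^(k-1-j) = 2^(k-1-j-1) + 2^(k-1-j-1) := by
          have := two_pow_split (k := k-1-j) h1
          convert this using 3 <;> omega
        omega
      have := assoc_gen (k := k) (2^j) (1 + 2^(k-1-j)) (by omega) he
      have harg : (rk k)^(2^j * (1 + 2^(k-1-j))) = -(rk k)^(2^j) := by
        rw [Nat.mul_add, mul_one, pow_add]
        have h2 : 2^j * 2^(k-1-j) = 2^(k-1) := by
          rw [← pow_add]; congr 1; omega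
        rw [h2, r_pow_Q]
        ring
      rw [harg, sub_neg_eq_add] at this
      exact this
    have h2j : (2:ℕ)^(j+1) = 2^j + 2^j := by rw [pow_succ]; omega
    have h1 : Associated ((piA k)^(2^(j+1)))
        ((1 - (rk k)^(2^j)) * (1 + (rk k)^(2^j))) := by
      rw [h2j, pow_add]
      exact Associated.mul_mul (ih hj') ((ih hj').trans hplus)
    rwa [← hstep] at h1

lemma two_assoc (hk : 2 ≤ k) : Associated ((piA k)^(2^(k-1))) 2 := by
  have := assoc_pow_two hk (k-1) le_rfl
  rwa [r_pow_Q, (by ring : (1 : Ak k) - -1 = 2)] at this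

def lamA (k : ℕ) : Ak k := 1 - (rk k)^(2^(k-2))

lemma lam_assoc (hk : 2 ≤ k) : Associated ((piA k)^(2^(k-2))) (lamA k) := by
  have := assoc_pow_two hk (k-2) (by omega)
  rwa [lamA]

lemma iA_sq (hk : 2 ≤ k) : ((rk k)^(2^(k-2)))^2 = -1 := by
  rw [← pow_mul]
  have : 2^(k-2) * 2 = 2^(k-1) := by
    rw [mul_comm, ← pow_succ']; congr 1; omega
  rw [this, r_pow_Q]

lemma conjA_iA (hk : 2 ≤ k) : conjA k ((rk k)^(2^(k-2))) = -((rk k)^(2^(k-2))) := by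
  rw [map_pow, conjA_r, neg_pow, ← pow_mul]
  set Q := 2^(k-1) with hQdef
  set h := 2^(k-2) with hhdef
  have hQ2h : Q = h + h := by
    have := two_pow_split (k := k - 1) (by omega)
    rw [hQdef, hhdef]
    convert this using 3 <;> omega
  have h1 : 1 ≤ h := Nat.one_le_two_pow
  have e0 : (Q - 1) * h = Q * (h - 1) + h := by
    have s1 : (Q-1)*h = Q*h - h := by rw [Nat.sub_one_mul]
    have s2 : Q*(h-1) = Q*h - Q := by rw [Nat.mul_sub_one]
    have s3 : Q ≤ Q*h := Nat.le_mul_of_pos_right Q (by omega)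
    omega
  rw [e0, pow_add, pow_mul, r_pow_Q]
  have hodd : Odd (h + (h-1)) := ⟨h-1, by omega⟩
  calc (-1:Ak k)^h * ((-1)^(h-1) * (rk k)^h) = (-1)^(h + (h-1)) * (rk k)^h := by
        rw [pow_add]; ring
  _ = -((rk k)^h) := by rw [hodd.neg_one_pow]; ring

lemma conjA_lam (hk : 2 ≤ k) : conjA k (lamA k) = 1 + (rk k)^(2^(k-2)) := by
  rw [lamA, map_sub, map_one, conjA_iA hk]
  ring

lemma lam_mul_conj (hk : 2 ≤ k) : lamA k * conjA k (lamA k) = 2 := by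
  rw [conjA_lam hk, lamA]
  have := iA_sq (k := k) hk
  linear_combination (norm := ring_nf) -this

lemma assoc_conj_pi (hk : 2 ≤ k) : Associated (piA k) (conjA k (piA k)) := by
  have hQ1 : 1 ≤ 2^(k-1) := Nat.one_le_two_pow
  have hc : conjA k (piA k) = 1 + (rk k)^(2^(k-1) - 1) := by
    rw [piA, map_sub, map_one, conjA_r]; ring
  have harg : (rk k)^(1 * (2*2^(k-1) - 1)) = -((rk k)^(2^(k-1)-1)) := by
    rw [one_mul]
    have hsp : 2*2^(k-1) - 1 = 2^(k-1) + (2^(k-1) - 1) := by omega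
    rw [hsp, pow_add, r_pow_Q]; ring
  have hassoc := assoc_gen (k := k) 1 (2*2^(k-1) - 1) (by omega) ⟨2^(k-1) - 1, by omega⟩
  rw [harg, sub_neg_eq_add, ← hc, pow_one] at hassoc
  exact hassoc

lemma psi2dual (a : Ak k) : (piA k ∣ conjA k a) ↔ (piA k ∣ a) := by
  rw [piA_dvd_iff, piA_dvd_iff, psi2_conjA]

lemma two_ne_zero_Ak (hk : 1 ≤ k) : (2 : Ak k) ≠ 0 := by
  intro h
  have : ((2:ℤ) : Ak k) = 0 := by push_cast; exact h
  have := intCast_inj_Ak hk this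
  norm_num at this

lemma descent (hk : 2 ≤ k) (a : Ak k) (t : ℕ) (ht : 1 ≤ t)
    (h : a * conjA k a = 2^t) : lamA k ∣ a := by
  haveI := Ak_domain (k := k) (by omega)
  obtain ⟨u2, hu2⟩ := (two_assoc (k := k) hk)
  obtain ⟨v, hv⟩ := (assoc_conj_pi (k := k) hk)
  have hQ2h : 2^(k-1) = 2^(k-2) + 2^(k-2) := by
    have := two_pow_split (k := k-1) (by omega)
    convert this using 3 <;> omega
  have key : ∀ j, j ≤ 2^(k-2) → (piA k)^j ∣ a ∧ (piA k)^j ∣ conjA k a := by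
    intro j
    induction j with
    | zero => intro _; simp
    | succ j ih =>
      intro hj1
      obtain ⟨hja, hjc⟩ := ih (by omega)
      obtain ⟨b, hb⟩ := hja
      -- conj a = pi^j * (v^j * conjA b)
      have hconj : conjA k a = (piA k)^j * ((v:Ak k)^j * conjA k b) := by
        rw [hb, map_mul, map_pow, ← hv]
        ring
      -- the big equation
      have hbig : (piA k)^(2*j) * ((v:Ak k)^j * (b * conjA k b))
          = (piA k)^(2*j) * ((piA k)^(t*2^(k-1) - 2*j) * (u2:Ak k)^t) := by
        have lhs_eq : (piA k)^(2*j) * ((v:Ak k)^j * (b * conjA k b)) = a * conjA k a := by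
          rw [hconj, hb]; ring
        have rhs_eq : (piA k)^(2*j) * ((piA k)^(t*2^(k-1) - 2*j) * (u2:Ak k)^t) = 2^t := by
          rw [← mul_assoc, ← pow_add]
          have harith : 2*j + (t*2^(k-1) - 2*j) = t * 2^(k-1) := by
            have h1 : 2^(k-1) ≤ t * 2^(k-1) := Nat.le_mul_of_pos_left _ (by omega)
            omega
          rw [harith, pow_mul', ← hu2]
          rw [mul_pow]
        rw [lhs_eq, rhs_eq, h]
      have hcan : (v:Ak k)^j * (b * conjA k b)
          = (piA k)^(t*2^(k-1) - 2*j) * (u2:Ak k)^t := by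
        exact mul_left_cancel₀ (pow_ne_zero _ (pi_ne_zero (by omega))) hbig
      have hpidvd : piA k ∣ (v:Ak k)^j * (b * conjA k b) := by
        rw [hcan]
        have : 1 ≤ t*2^(k-1) - 2*j := by
          have h1 : 2^(k-1) ≤ t * 2^(k-1) := Nat.le_mul_of_pos_left _ (by omega)
          omega
        exact Dvd.dvd.mul_right (dvd_pow_self _ (by omega)) _
      have hpib : piA k ∣ b := by
        rcases (prime_pi (k:=k) (by omega)).2.2 _ _ hpidvd with h1 | h1
        · exfalso
          have : IsUnit ((v:Ak k)^j) := (v^j).isUnit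
          exact (prime_pi (k:=k) (by omega)).2.1 (isUnit_of_dvd_unit h1 this)
        · rcases (prime_pi (k:=k) (by omega)).2.2 _ _ h1 with h2 | h2
          · exact h2
          · exact (psi2dual b).1 h2
      have hpicb : piA k ∣ conjA k b := (psi2dual b).2 hpib
      constructor
      · rw [hb]
        obtain ⟨cc, hcc⟩ := hpib
        exact ⟨cc, by rw [hcc, pow_succ]; ring⟩
      · rw [hconj]
        obtain ⟨cc, hcc⟩ := hpicb
        exact ⟨(v:Ak k)^j * cc, by rw [hcc, pow_succ]; ring⟩
  have hfin := (key (2^(k-2)) le_rfl).1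
  exact (Associated.dvd (lam_assoc hk).symm).trans hfin

lemma classify (hk : 2 ≤ k) : ∀ (t : ℕ) (a : Ak k), a * conjA k a = 2^t →
    ∃ w : Ak k, IsUnit w ∧ a = (lamA k)^t * w := by
  haveI := Ak_domain (k := k) (by omega)
  intro t
  induction t with
  | zero =>
    intro a h
    rw [pow_zero] at h
    exact ⟨a, IsUnit.of_mul_eq_one _ h, by rw [pow_zero, one_mul]⟩
  | succ t ih =>
    intro a h
    obtain ⟨b, hb⟩ := descent hk a (t+1) (by omega) h
    have hb2 : b * conjA k b = 2^t := by
      have hexp : a * conjA k a = (lamA k * conjA k (lamA k)) * (b * conjA k b) := by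
        rw [hb, map_mul]; ring
      rw [lam_mul_conj hk, h] at hexp
      have h2 : (2:Ak k) * 2^t = 2 * (b * conjA k b) := by
        rw [← pow_succ']; exact hexp
      exact (mul_left_cancel₀ (two_ne_zero_Ak (by omega)) h2).symm
    obtain ⟨w, hw, hwe⟩ := ih b hb2
    exact ⟨w, hw, by rw [hb, hwe, pow_succ]; ring⟩

lemma zeta_mem : zetaQ (2^k) ∈ IntermediateField.adjoin ℚ {zetaQ (2^k)} :=
  IntermediateField.mem_adjoin_simple_self ℚ _

lemma zeta_integral (hk : 1 ≤ k) : IsIntegral ℚ (zetaQ (2^k)) := by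
  refine ⟨X ^ (2^(k-1)) + 1, ?_, ?_⟩
  · have : (1 : ℚ[X]) = C 1 := by simp
    rw [this]
    exact Polynomial.monic_X_pow_add_C _ (by positivity)
  · simp only [Polynomial.eval₂_add, Polynomial.eval₂_pow, Polynomial.eval₂_X,
      Polynomial.eval₂_one]
    rw [zeta_pow_half hk]; ring

-- the canonical map into the number field
def zetaK (k : ℕ) : IntermediateField.adjoin ℚ {zetaQ (2^k)} := ⟨zetaQ (2^k), zeta_mem⟩

lemma zetaK_pow (hk : 1 ≤ k) : (zetaK k)^(2^(k-1)) + 1 = 0 := by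
  apply Subtype.ext
  push_cast
  show zetaQ (2^k) ^ (2^(k-1)) + 1 = 0
  rw [zeta_pow_half hk]; ring

def chiK (k : ℕ) : Ak k →+* IntermediateField.adjoin ℚ {zetaQ (2^k)} :=
  AdjoinRoot.lift (Int.castRingHom _) (if 1 ≤ k then zetaK k else -1) (by
    simp only [pQ, Polynomial.eval₂_add, Polynomial.eval₂_pow, Polynomial.eval₂_X,
      Polynomial.eval₂_one]
    by_cases h : 1 ≤ k
    · rw [if_pos h]
      have := zetaK_pow (k := k) h
      linear_combination (norm := ring_nf) this
    · have h0 : k = 0 := by omega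
      subst h0
      rw [if_neg (by omega)]
      norm_num)

lemma chiK_r (hk : 1 ≤ k) : chiK k (rk k) = zetaK k := by
  rw [chiK, rk]
  rw [AdjoinRoot.lift_root]
  rw [if_pos hk]

lemma psi_mk (ψ : Ak k →+* ℂ) (P : ℤ[X]) :
    ψ (AdjoinRoot.mk (pQ k) P) = Polynomial.aeval (ψ (rk k)) P := by
  have := Polynomial.aeval_algHom_apply (ψ.toIntAlgHom) (rk k) P
  rw [rk, AdjoinRoot.aeval_eq] at this
  exact this.symm

lemma psi_r_pow (ψ : Ak k →+* ℂ) : (ψ (rk k))^(2^(k-1)) = -1 := by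
  rw [← map_pow, r_pow_Q]
  simp

-- main lemma of this part
lemma phi_w_root_of_unity (hk : 2 ≤ k) (w : Ak k) (φ : Ak k →+* ℂ)
    (hφr : φ (rk k) = zetaQ (2^k))
    (hnorm : ∀ ψ : Ak k →+* ℂ, ψ w * (starRingEnd ℂ) (ψ w) = 1) :
    ∃ e < 2^k, φ w = (zetaQ (2^k))^e := by
  set K := IntermediateField.adjoin ℚ {zetaQ (2^k)} with hK
  haveI hFD : FiniteDimensional ℚ K :=
    IntermediateField.adjoin.finiteDimensional (zeta_integral (by omega))
  haveI : NumberField K := { to_charZero := inferInstance, to_finiteDimensional := hFD }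
  set x : K := chiK k w with hx
  -- φ agrees with the composite through K
  have hcomp : (algebraMap K ℂ).comp (chiK k) = φ := by
    have hext : ∀ (g₁ g₂ : Ak k →+* ℂ), g₁ (rk k) = g₂ (rk k) → g₁ = g₂ := by
      intro g₁ g₂ hg
      refine RingHom.ext fun a => ?_
      obtain ⟨P, rfl⟩ := AdjoinRoot.mk_surjective a
      rw [psi_mk, psi_mk, hg]
    apply hext
    rw [RingHom.comp_apply, chiK_r (by omega), hφr]
    rfl
  -- x is an algebraic integer
  have hxint : IsIntegral ℤ x := by
    haveI : Module.Finite ℤ (Ak k) :=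
      Module.Finite.of_basis (AdjoinRoot.powerBasis' (pQ_monic k)).basis
    haveI : Algebra.IsIntegral ℤ (Ak k) := Algebra.IsIntegral.of_finite ℤ (Ak k)
    exact IsIntegral.map (chiK k).toIntAlgHom (Algebra.IsIntegral.isIntegral w)
  -- all embeddings have norm one
  have hnormK : ∀ σ : K →+* ℂ, ‖σ x‖ = 1 := by
    intro σ
    have h1 := hnorm (σ.comp (chiK k))
    rw [RingHom.comp_apply] at h1
    have h2 : Complex.normSq (σ x) = 1 := by
      have := Complex.mul_conj (σ x)
      rw [h1] at this
      exact_mod_cast this.symm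
    have h3 : ‖σ x‖ ^ 2 = 1 := by rw [Complex.sq_norm]; exact h2
    have h4 : ‖σ x‖ = 1 := by
      have hnn := norm_nonneg (σ x)
      have : (‖σ x‖ - 1) * (‖σ x‖ + 1) = 0 := by nlinarith
      rcases mul_eq_zero.1 this with h | h
      · linarith
      · linarith
    rw [h4]
  obtain ⟨m, hm0, hmw⟩ := NumberField.Embeddings.pow_eq_one_of_norm_eq_one K ℂ hxint hnormK
  have hfin : IsOfFinOrder x := isOfFinOrder_iff_pow_eq_one.2 ⟨m, hm0, hmw⟩
  -- finrank
  have hfr : Module.finrank ℚ K = 2^(k-1) := by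
    rw [hK, IntermediateField.adjoin.finrank (zeta_integral (by omega)),
      minpoly_zeta (by omega : 1 ≤ k)]
    have : (1 : ℚ[X]) = C 1 := by simp
    rw [this, Polynomial.natDegree_X_pow_add_C]
  -- primitive root in K
  have hζKprim : IsPrimitiveRoot (zetaK k) (2^k) := by
    apply IsPrimitiveRoot.of_map_of_injective (f := algebraMap K ℂ)
    · exact hzeta k
    · exact (algebraMap K ℂ).injective
  have hordζK : orderOf (zetaK k) = 2^k := (hζKprim.eq_orderOf).symm
  -- order analysis
  set d := orderOf x with hd
  have hd0 : 0 < d := hfin.orderOf_pos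
  set v := d.factorization 2 with hv
  set b := d / 2^v with hb
  have hvb : 2^v * b = d := Nat.ordProj_mul_ordCompl_eq_self d 2
  have hbodd : ¬ (2 ∣ b) := Nat.not_dvd_ordCompl Nat.prime_two (by omega)
  have hb0 : 0 < b := by
    rcases Nat.eq_zero_or_pos b with h0 | h0
    · rw [h0, mul_zero] at hvb; omega
    · exact h0
  have hordy : orderOf (x^(2^v)) = b := by
    rw [orderOf_pow' x (pow_ne_zero v two_ne_zero), ← hd,
      Nat.gcd_eq_right ⟨b, hvb.symm⟩, ← hvb, Nat.mul_div_cancel_left _ (by positivity)]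
  have hb1 : b = 1 := by
    by_contra hb1
    have hbge3 : 3 ≤ b := by omega
    set y := x^(2^v) with hy
    set uu := zetaK k * y with huu
    have hcop : Nat.Coprime (2^k) b :=
      Nat.Coprime.pow_left k ((Nat.prime_two.coprime_iff_not_dvd).2 hbodd)
    have horduu : orderOf uu = 2^k * b := by
      rw [huu, Commute.orderOf_mul_eq_mul_orderOf_of_coprime (Commute.all _ _)]
      · rw [hordζK, hordy]
      · rw [hordζK, hordy]; exact hcop
    have hprim_uu : IsPrimitiveRoot uu (2^k * b) := by
      have := IsPrimitiveRoot.orderOf uu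
      rwa [horduu] at this
    have hmin := Polynomial.cyclotomic_eq_minpoly_rat hprim_uu (by positivity)
    have hdeg : (minpoly ℚ uu).natDegree ≤ Module.finrank ℚ K := minpoly.natDegree_le uu
    rw [← hmin, Polynomial.natDegree_cyclotomic, hfr] at hdeg
    rw [Nat.totient_mul hcop] at hdeg
    have htot2k : (2^k).totient = 2^(k-1) := by
      rw [Nat.totient_prime_pow Nat.prime_two (by omega)]
      norm_num
    rw [htot2k] at hdeg
    have htotb : 2 ≤ b.totient := by
      have h1 : b.totient ≠ 0 := (Nat.totient_pos.2 hb0).ne'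
      have h2 : b.totient ≠ 1 := by
        intro hh
        rcases Nat.totient_eq_one_iff.1 hh with h | h <;> omega
      omega
    have hpos : 0 < 2^(k-1) := by positivity
    nlinarith
  have hdv : d = 2^v := by rw [← hvb, hb1, mul_one]
  have hvk : v ≤ k := by
    by_contra hvk
    have hv1 : 1 ≤ v := by omega
    have hprimx : IsPrimitiveRoot x (2^v) := by
      have := IsPrimitiveRoot.orderOf x
      rwa [← hd, hdv] at this
    have hmin := Polynomial.cyclotomic_eq_minpoly_rat hprimx (by positivity)
    have hdeg : (minpoly ℚ x).natDegree ≤ Module.finrank ℚ K := minpoly.natDegree_le x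
    rw [← hmin, Polynomial.natDegree_cyclotomic, hfr,
      Nat.totient_prime_pow Nat.prime_two (by omega)] at hdeg
    norm_num at hdeg
    have := (Nat.pow_le_pow_iff_right (a := 2) (by norm_num)).1 hdeg
    omega
  have hx2k : x^(2^k) = 1 := by
    apply orderOf_dvd_iff_pow_eq_one.1
    rw [← hd, hdv]
    exact pow_dvd_pow 2 hvk
  -- transfer to ℂ
  have hφw : φ w = (algebraMap K ℂ) x := by rw [← hcomp]; rfl
  have hφw2k : (φ w)^(2^k) = 1 := by
    rw [hφw, ← map_pow, hx2k, map_one]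
  haveI : NeZero (2^k) := ⟨by positivity⟩
  obtain ⟨e, he, hze⟩ := (hzeta k).eq_pow_of_pow_eq_one hφw2k
  exact ⟨e, he, hze.symm⟩

lemma one_sub_x_norm {x : ℂ} (hx : x^2 = -1) :
    (1 - x) * (starRingEnd ℂ) (1 - x) = 2 := by
  have h0 : (x - Complex.I) * (x + Complex.I) = 0 := by
    have hI := Complex.I_sq
    linear_combination hx - hI
  rcases mul_eq_zero.1 h0 with h | h
  · have hxI : x = Complex.I := by linear_combination h
    subst hxI
    rw [map_sub, map_one, Complex.conj_I]
    have hI := Complex.I_sq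
    linear_combination -hI
  · have hxI : x = -Complex.I := by linear_combination h
    subst hxI
    rw [map_sub, map_one, map_neg, Complex.conj_I]
    have hI := Complex.I_sq
    linear_combination -hI

lemma final_alpha (hk : 2 ≤ k) (t : ℕ) (P : ℤ[X])
    (h : Polynomial.aeval (zetaQ (2^k)) P *
      (starRingEnd ℂ) (Polynomial.aeval (zetaQ (2^k)) P) = (2:ℂ)^t) :
    ∃ e < 2^k, Polynomial.aeval (zetaQ (2^k)) P
      = (1 - (zetaQ (2^k))^(2^(k-2)))^t * (zetaQ (2^k))^e := by
  have hk1 : 1 ≤ k := by omega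
  set a : Ak k := AdjoinRoot.mk (pQ k) P with ha
  have hφa : phiA k a = Polynomial.aeval (zetaQ (2^k)) P := phiA_mk hk1 P
  have hAA : a * conjA k a = 2^t := by
    apply phiA_inj hk1
    rw [map_mul, phiA_conjA hk1, hφa, map_pow, h, map_ofNat]
  obtain ⟨w, hw, hwe⟩ := classify hk t a hAA
  have hpsi_all : ∀ ψ : Ak k →+* ℂ, ψ a * (starRingEnd ℂ) (ψ a) = (2:ℂ)^t := by
    intro ψ
    have hc := conj_abs_all hk1 P (2^t) (by push_cast; exact h)
      (ψ (rk k)) (psi_r_pow ψ)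
    rw [ha, psi_mk ψ P]
    push_cast at hc
    exact hc
  have hlam_norm : ∀ ψ : Ak k →+* ℂ, ψ (lamA k) * (starRingEnd ℂ) (ψ (lamA k)) = 2 := by
    intro ψ
    have hx2 : (ψ ((rk k)^(2^(k-2))))^2 = -1 := by
      rw [← map_pow, iA_sq hk]; simp
    have : ψ (lamA k) = 1 - ψ ((rk k)^(2^(k-2))) := by
      rw [lamA, map_sub, map_one]
    rw [this]
    exact one_sub_x_norm hx2
  have hwnorm : ∀ ψ : Ak k →+* ℂ, ψ w * (starRingEnd ℂ) (ψ w) = 1 := by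
    intro ψ
    have e1 : ψ a * (starRingEnd ℂ) (ψ a)
        = (ψ (lamA k) * (starRingEnd ℂ) (ψ (lamA k)))^t * (ψ w * (starRingEnd ℂ) (ψ w)) := by
      rw [hwe, map_mul, map_pow, map_mul, map_pow]
      ring
    rw [hpsi_all ψ, hlam_norm ψ] at e1
    have h2t : (2:ℂ)^t ≠ 0 := pow_ne_zero _ two_ne_zero
    have : (2:ℂ)^t * 1 = 2^t * (ψ w * (starRingEnd ℂ) (ψ w)) := by rw [mul_one]; exact e1
    exact (mul_left_cancel₀ h2t this).symm
  obtain ⟨e, he, hφw⟩ := phi_w_root_of_unity hk w (phiA k) (phiA_r hk1) hwnorm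
  refine ⟨e, he, ?_⟩
  rw [← hφa, hwe, map_mul, map_pow]
  have hφlam : phiA k (lamA k) = 1 - (zetaQ (2^k))^(2^(k-2)) := by
    rw [lamA, map_sub, map_one, map_pow, phiA_r hk1]
  rw [hφlam, hφw]

lemma zeta_split (hk : 1 ≤ k) (j : ℕ) :
    zetaQ (2^k) ^ j = (((-1:ℤ)^(j / 2^(k-1)) : ℤ) : ℂ) * zetaQ (2^k) ^ (j % 2^(k-1)) := by
  conv_lhs => rw [← Nat.div_add_mod j (2^(k-1))]
  rw [pow_add, pow_mul, zeta_pow_half hk]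
  push_cast
  ring

lemma sum_single_ite (Q : ℕ) (m₀ : ℕ) (hm₀ : m₀ < Q) (c : ℤ) (g : ℕ → ℂ) :
    ∑ m ∈ Finset.range Q, (((if m = m₀ then c else 0 : ℤ)) : ℂ) * g m = (c:ℂ) * g m₀ := by
  rw [Finset.sum_congr rfl (fun m _ => by
    rw [show (((if m = m₀ then c else 0 : ℤ)) : ℂ) * g m
      = (if m = m₀ then (c:ℂ) * g m else 0) from by split_ifs <;> simp])]
  rw [Finset.sum_ite_eq' (Finset.range Q) m₀ (fun m => (c:ℂ) * g m)]
  rw [if_pos (Finset.mem_range.2 hm₀)]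

lemma sum_single_ite_int (Q : ℕ) (m₀ : ℕ) (hm₀ : m₀ < Q) (c : ℤ) (g : ℕ → ℤ) :
    ∑ m ∈ Finset.range Q, (if m = m₀ then c else 0 : ℤ) * g m = c * g m₀ := by
  rw [Finset.sum_congr rfl (fun m _ => by
    rw [show ((if m = m₀ then c else 0 : ℤ)) * g m
      = (if m = m₀ then c * g m else 0) from by split_ifs <;> simp])]
  rw [Finset.sum_ite_eq' (Finset.range Q) m₀ (fun m => c * g m)]
  rw [if_pos (Finset.mem_range.2 hm₀)]

lemma pm_mul {a b : ℤ} (ha : a = 1 ∨ a = -1) (hb : b = 1 ∨ b = -1) :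
    a * b = 1 ∨ a * b = -1 := by
  rcases ha with rfl | rfl <;> rcases hb with rfl | rfl <;> norm_num

lemma pm_pow (p : ℕ) : (-1:ℤ)^p = 1 ∨ (-1:ℤ)^p = -1 := by
  rcases Nat.even_or_odd p with h | h
  · exact Or.inl h.neg_one_pow
  · exact Or.inr h.neg_one_pow

-- the polynomial attached to coefficients MM
def Ppoly (Q : ℕ) (MM : ℕ → ℤ) : ℤ[X] := ∑ m ∈ Finset.range Q, C (MM m) * X ^ m

lemma aeval_Ppoly (Q : ℕ) (MM : ℕ → ℤ) (z : ℂ) :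
    Polynomial.aeval z (Ppoly Q MM) = ∑ m ∈ Finset.range Q, (MM m : ℂ) * z ^ m := by
  rw [Ppoly, map_sum]
  refine Finset.sum_congr rfl (fun m _ => ?_)
  rw [map_mul, Polynomial.aeval_C, map_pow, Polynomial.aeval_X]
  norm_num

lemma x_sq (hk : 2 ≤ k) : ((zetaQ (2^k))^(2^(k-2)))^2 = -1 := by
  rw [← pow_mul]
  have he : 2^(k-2) * 2 = 2^(k-1) := by
    rw [mul_comm, ← pow_succ']; congr 1; omega
  rw [he, zeta_pow_half (by omega)]

lemma even_case (hk : 2 ≤ k) (p : ℕ) (MM sg : ℕ → ℤ)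
    (hsg : ∀ m, sg m = 1 ∨ sg m = -1)
    (hAA : (∑ m ∈ Finset.range (2^(k-1)), (MM m:ℂ) * zetaQ (2^k) ^ m) *
      (starRingEnd ℂ) (∑ m ∈ Finset.range (2^(k-1)), (MM m:ℂ) * zetaQ (2^k) ^ m)
        = (2:ℂ)^(p+p)) :
    ∃ εz : ℤ, (εz = 1 ∨ εz = -1) ∧
      (∑ m ∈ Finset.range (2^(k-1)), MM m * sg m) = εz * 2^p := by
  have hk1 : 1 ≤ k := by omega
  set ζ := zetaQ (2^k) with hζ
  set Q := 2^(k-1) with hQ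
  have hQ0 : 0 < Q := by positivity
  have haP : Polynomial.aeval ζ (Ppoly Q MM) = ∑ m ∈ Finset.range Q, (MM m:ℂ) * ζ ^ m :=
    aeval_Ppoly Q MM ζ
  obtain ⟨e, he, hαe⟩ := final_alpha hk (p+p) (Ppoly Q MM) (by rw [haP]; exact hAA)
  set x := ζ^(2^(k-2)) with hx
  have hx2 : x^2 = -1 := x_sq hk
  have hsq : (1 - x)^2 = -2 * x := by linear_combination hx2
  have hαx : Polynomial.aeval ζ (Ppoly Q MM) = ((-2:ℂ))^p * ζ ^ (2^(k-2) * p + e) := by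
    rw [hαe, show p + p = 2 * p from by omega, pow_mul, hsq, mul_pow, hx, ← pow_mul,
      pow_add]
    ring
  set E := 2^(k-2) * p + e with hE
  have hsplit := zeta_split (k := k) hk1 E
  set m₀ := E % Q with hm₀def
  have hm₀ : m₀ < Q := Nat.mod_lt _ hQ0
  set c₀ : ℤ := (-1)^p * 2^p * (-1)^(E / Q) with hc₀
  have hneg2 : (-2:ℂ)^p = (-1:ℂ)^p * 2^p := by rw [neg_pow]
  have hαc : ∑ m ∈ Finset.range Q, (MM m:ℂ) * ζ ^ m = (c₀:ℂ) * ζ^m₀ := by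
    rw [← haP, hαx, hsplit, hc₀, hneg2]
    push_cast
    ring
  have hMM : ∀ m < Q, MM m = if m = m₀ then c₀ else 0 := by
    have hz := coords hk1 (fun m => MM m - if m = m₀ then c₀ else 0) (by
      rw [Finset.sum_congr rfl (fun m _ => by
        rw [show (((MM m - (if m = m₀ then c₀ else 0) : ℤ)) : ℂ) * ζ^m
          = (MM m : ℂ) * ζ^m - (((if m = m₀ then c₀ else 0):ℤ) : ℂ) * ζ^m from by
            push_cast; ring])]
      rw [Finset.sum_sub_distrib, sub_eq_zero, hαc]
      exact (sum_single_ite Q m₀ hm₀ c₀ (fun m => ζ ^ m)).symm)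
    intro m hm
    exact sub_eq_zero.1 (hz m hm)
  have hW : (∑ m ∈ Finset.range Q, MM m * sg m) = c₀ * sg m₀ := by
    rw [Finset.sum_congr rfl (fun m hm => by rw [hMM m (Finset.mem_range.1 hm)])]
    exact sum_single_ite_int Q m₀ hm₀ c₀ sg
  refine ⟨(-1)^p * (-1)^(E / Q) * sg m₀, pm_mul (pm_mul (pm_pow p) (pm_pow _)) (hsg m₀), ?_⟩
  rw [hW, hc₀]
  ring

lemma odd_case (hk : 2 ≤ k) (p : ℕ) (MM sg : ℕ → ℤ)
    (hsg : ∀ m, sg m = 1 ∨ sg m = -1)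
    (hAA : (∑ m ∈ Finset.range (2^(k-1)), (MM m:ℂ) * zetaQ (2^k) ^ m) *
      (starRingEnd ℂ) (∑ m ∈ Finset.range (2^(k-1)), (MM m:ℂ) * zetaQ (2^k) ^ m)
        = (2:ℂ)^(p+p+1)) :
    (∑ m ∈ Finset.range (2^(k-1)), MM m * sg m) = 0 ∨
    ∃ εz : ℤ, (εz = 1 ∨ εz = -1) ∧
      (∑ m ∈ Finset.range (2^(k-1)), MM m * sg m) = εz * 2^(p+1) := by
  have hk1 : 1 ≤ k := by omega
  set ζ := zetaQ (2^k) with hζ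
  set Q := 2^(k-1) with hQ
  have hQ0 : 0 < Q := by positivity
  have hh0 : 0 < 2^(k-2) := by positivity
  have hhQ : 2^(k-2) < Q := by
    rw [hQ]; exact Nat.pow_lt_pow_right (by norm_num) (by omega)
  have haP : Polynomial.aeval ζ (Ppoly Q MM) = ∑ m ∈ Finset.range Q, (MM m:ℂ) * ζ ^ m :=
    aeval_Ppoly Q MM ζ
  obtain ⟨e, he, hαe⟩ := final_alpha hk (p+p+1) (Ppoly Q MM) (by rw [haP]; exact hAA)
  set x := ζ^(2^(k-2)) with hx
  have hx2 : x^2 = -1 := x_sq hk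
  have hsq : (1 - x)^2 = -2 * x := by linear_combination hx2
  set E := 2^(k-2) * p + e with hE
  have hαx : Polynomial.aeval ζ (Ppoly Q MM)
      = ((-2:ℂ))^p * ζ ^ E - ((-2:ℂ))^p * ζ ^ (E + 2^(k-2)) := by
    rw [hαe, show p + p + 1 = 2 * p + 1 from by omega, pow_succ, pow_mul, hsq, mul_pow,
      hx, ← pow_mul, hE]
    rw [pow_add, pow_add, pow_add]
    ring
  set m₁ := E % Q with hm₁def
  set m₂ := (E + 2^(k-2)) % Q with hm₂def
  have hm₁ : m₁ < Q := Nat.mod_lt _ hQ0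
  have hm₂ : m₂ < Q := Nat.mod_lt _ hQ0
  have hne : m₁ ≠ m₂ := by
    intro hcontra
    have hmodeq : Nat.ModEq Q (E + 2^(k-2)) (E + 0) := by
      unfold Nat.ModEq
      rw [Nat.add_zero]
      exact (hm₂def ▸ hcontra.symm ▸ rfl : (E + 2^(k-2)) % Q = E % Q)
    have := (Nat.ModEq.add_left_cancel' E hmodeq)
    have hdvd : Q ∣ 2^(k-2) := (Nat.modEq_zero_iff_dvd).1 this
    have := Nat.le_of_dvd hh0 hdvd
    omega
  set c₁ : ℤ := (-1)^p * 2^p * (-1)^(E / Q) with hc₁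
  set c₂ : ℤ := -((-1)^p * 2^p * (-1)^((E + 2^(k-2)) / Q)) with hc₂
  have hneg2 : (-2:ℂ)^p = (-1:ℂ)^p * 2^p := by rw [neg_pow]
  have hαc : ∑ m ∈ Finset.range Q, (MM m:ℂ) * ζ ^ m = (c₁:ℂ) * ζ^m₁ + (c₂:ℂ) * ζ^m₂ := by
    rw [← haP, hαx, zeta_split (k := k) hk1 E, zeta_split (k := k) hk1 (E + 2^(k-2)), hc₁, hc₂,
      hneg2]
    push_cast
    ring
  have hMM : ∀ m < Q, MM m = (if m = m₁ then c₁ else 0) + (if m = m₂ then c₂ else 0) := by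
    have hz := coords hk1
      (fun m => MM m - ((if m = m₁ then c₁ else 0) + (if m = m₂ then c₂ else 0))) (by
      rw [Finset.sum_congr rfl (fun m _ => by
        rw [show (((MM m - ((if m = m₁ then c₁ else 0) + (if m = m₂ then c₂ else 0)) : ℤ)) : ℂ) * ζ^m
          = (MM m : ℂ) * ζ^m - ((((if m = m₁ then c₁ else 0):ℤ):ℂ) * ζ^m
              + (((if m = m₂ then c₂ else 0):ℤ):ℂ) * ζ^m) from by push_cast; ring])]
      rw [Finset.sum_sub_distrib, sub_eq_zero, hαc, Finset.sum_add_distrib,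
        sum_single_ite Q m₁ hm₁ c₁ (fun m => ζ ^ m),
        sum_single_ite Q m₂ hm₂ c₂ (fun m => ζ ^ m)])
    intro m hm
    exact sub_eq_zero.1 (hz m hm)
  have hW : (∑ m ∈ Finset.range Q, MM m * sg m) = c₁ * sg m₁ + c₂ * sg m₂ := by
    rw [Finset.sum_congr rfl (fun m hm => by rw [hMM m (Finset.mem_range.1 hm)])]
    rw [Finset.sum_congr rfl (fun m _ => by
      rw [show ((if m = m₁ then c₁ else 0) + (if m = m₂ then c₂ else 0)) * sg m
        = (if m = m₁ then c₁ else 0) * sg m + (if m = m₂ then c₂ else 0) * sg m from by ring])]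
    rw [Finset.sum_add_distrib,
      sum_single_ite_int Q m₁ hm₁ c₁ sg, sum_single_ite_int Q m₂ hm₂ c₂ sg]
  set A : ℤ := (-1)^p * (-1)^(E / Q) * sg m₁ with hA
  set B : ℤ := (-1)^p * (-1)^((E + 2^(k-2)) / Q) * sg m₂ with hB
  have hWAB : (∑ m ∈ Finset.range Q, MM m * sg m) = 2^p * (A - B) := by
    rw [hW, hc₁, hc₂, hA, hB]; ring
  have hApm : A = 1 ∨ A = -1 := pm_mul (pm_mul (pm_pow p) (pm_pow _)) (hsg m₁)
  have hBpm : B = 1 ∨ B = -1 := pm_mul (pm_mul (pm_pow p) (pm_pow _)) (hsg m₂)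
  rcases hApm with hA1 | hA1 <;> rcases hBpm with hB1 | hB1 <;> rw [hA1, hB1] at hWAB
  · left; rw [hWAB]; ring
  · right; exact ⟨1, Or.inl rfl, by rw [hWAB]; ring⟩
  · right; exact ⟨-1, Or.inr rfl, by rw [hWAB]; ring⟩
  · left; rw [hWAB]; ring

section Reduce
variable {n : ℕ}

def sgn2 : ZMod 2 → ℤ := fun a => if a = 0 then 1 else -1

lemma sgn2_cases (a : ZMod 2) : sgn2 a = 1 ∨ sgn2 a = -1 := by
  unfold sgn2; split_ifs <;> simp

lemma sgn2_add (a b : ZMod 2) : sgn2 (a + b) = sgn2 a * sgn2 b := by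
  revert a b; decide

lemma sgn2_val (a : ZMod 2) : ((-1:ℂ))^(a.val) = ((sgn2 a : ℤ) : ℂ) := by
  have h2 : a = 0 ∨ a = 1 := by revert a; decide
  rcases h2 with rfl | rfl
  · simp [sgn2, ZMod.val_zero]
  · rw [ZMod.val_one]
    simp [sgn2]

lemma neg_one_pow_mod2 (N : ℕ) : ((-1:ℂ))^N = (-1)^(N % 2) := by
  conv_lhs => rw [← Nat.div_add_mod N 2]
  rw [pow_add, pow_mul]
  norm_num

lemma pow_sum_val (u x : Fin n → ZMod 2) :
    (-1:ℂ)^(∑ i, (u i * x i).val) = ((sgn2 (∑ i, u i * x i) : ℤ) : ℂ) := by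
  have hcast : ((∑ i, (u i * x i).val : ℕ) : ZMod 2) = ∑ i, u i * x i := by
    rw [Nat.cast_sum]
    refine Finset.sum_congr rfl (fun i _ => ?_)
    rw [ZMod.natCast_val, ZMod.cast_id]
  have key : (∑ i, (u i * x i).val) % 2 = (∑ i, u i * x i : ZMod 2).val := by
    rw [← hcast, ZMod.val_natCast]
  rw [neg_one_pow_mod2, key, sgn2_val]

def Nfun (f : (Fin n → ZMod 2) → ZMod (2^k)) (u : Fin n → ZMod 2) : ℕ → ℤ :=
  fun j => ∑ x ∈ Finset.univ.filter (fun x => (f x).val = j), sgn2 (∑ i, u i * x i)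

def Gfun (k : ℕ) (c : Fin (k-1) → ZMod 2) : ℕ → ZMod 2 :=
  fun j => (∑ j' : Fin (k - 1), c j' * ((j / 2 ^ (j':ℕ) : ℕ) : ZMod 2))
    + ((j / 2 ^ (k-1) : ℕ) : ZMod 2)

lemma comp_eq_G (f : (Fin n → ZMod 2) → ZMod (2^k)) (c : Fin (k-1) → ZMod 2)
    (x : Fin n → ZMod 2) : comp f c x = Gfun k c ((f x).val) := rfl

lemma E1 (hk : 1 ≤ k) (f : (Fin n → ZMod 2) → ZMod (2^k)) (u : Fin n → ZMod 2) :
    gWHT (2^k) f u = ∑ j ∈ Finset.range (2^k), ((Nfun f u j : ℤ) : ℂ) * (zetaQ (2^k))^j := by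
  haveI : NeZero (2^k) := ⟨by positivity⟩
  rw [gWHT]
  rw [← Finset.sum_fiberwise_of_maps_to
    (g := fun x : (Fin n → ZMod 2) => (f x).val) (t := Finset.range (2^k))
    (fun x _ => Finset.mem_range.2 (ZMod.val_lt _)) _]
  refine Finset.sum_congr rfl (fun j hj => ?_)
  rw [Finset.sum_congr rfl (fun x hx => by
    rw [(Finset.mem_filter.1 hx).2, pow_sum_val u x])]
  rw [Nfun]
  push_cast
  rw [Finset.sum_mul]
  exact Finset.sum_congr rfl (fun x _ => mul_comm _ _)

lemma E2 (hk : 1 ≤ k) (f : (Fin n → ZMod 2) → ZMod (2^k)) (c : Fin (k-1) → ZMod 2)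
    (u : Fin n → ZMod 2) :
    bWHT (comp f c) u
      = ((∑ j ∈ Finset.range (2^k), Nfun f u j * sgn2 (Gfun k c j) : ℤ) : ℂ) := by
  haveI : NeZero (2^k) := ⟨by positivity⟩
  rw [bWHT]
  rw [← Finset.sum_fiberwise_of_maps_to
    (g := fun x : (Fin n → ZMod 2) => (f x).val) (t := Finset.range (2^k))
    (fun x _ => Finset.mem_range.2 (ZMod.val_lt _)) _]
  push_cast
  refine Finset.sum_congr rfl (fun j hj => ?_)
  rw [Nfun]
  push_cast
  rw [Finset.sum_mul]
  refine Finset.sum_congr rfl (fun x hx => ?_)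
  rw [sgn2_val (comp f c x + ∑ i, u i * x i), sgn2_add, comp_eq_G f c x,
    (Finset.mem_filter.1 hx).2]
  push_cast
  ring

lemma G_flip (hk : 2 ≤ k) (c : Fin (k-1) → ZMod 2) (m : ℕ) (hm : m < 2^(k-1)) :
    Gfun k c (2^(k-1) + m) = Gfun k c m + 1 := by
  rw [Gfun, Gfun]
  have hlow : ∀ j' : Fin (k-1), (((2^(k-1) + m) / 2 ^ (j':ℕ) : ℕ) : ZMod 2)
      = ((m / 2 ^ (j':ℕ) : ℕ) : ZMod 2) := by
    intro j'
    have hj' : (j':ℕ) < k - 1 := j'.2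
    have hdiv : (2^(k-1) + m) / 2^(j':ℕ) = m / 2^(j':ℕ) + 2^(k-1-(j':ℕ)) := by
      rw [add_comm (2^(k-1)) m]
      have hexp : (2:ℕ)^(k-1) = 2^(j':ℕ) * 2^(k-1-(j':ℕ)) := by
        rw [← pow_add]; congr 1; omega
      rw [hexp, Nat.add_mul_div_left _ _ (by positivity)]
    have hzero : ((2^(k-1-(j':ℕ)) : ℕ) : ZMod 2) = 0 := by
      rw [ZMod.natCast_eq_zero_iff]
      exact dvd_pow_self 2 (by omega)
    rw [hdiv, Nat.cast_add, hzero, add_zero]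
  have htop : (((2^(k-1) + m) / 2 ^ (k-1) : ℕ) : ZMod 2)
      = ((m / 2 ^ (k-1) : ℕ) : ZMod 2) + 1 := by
    have hdiv : (2^(k-1) + m) / 2^(k-1) = m / 2^(k-1) + 1 := by
      rw [add_comm (2^(k-1)) m, Nat.add_div_right _ (by positivity)]
    rw [hdiv, Nat.cast_add, Nat.cast_one]
  rw [htop, Finset.sum_congr rfl (fun j' _ => by rw [hlow j'])]
  ring

lemma reduce (hk : 2 ≤ k) (f : (Fin n → ZMod 2) → ZMod (2^k))
    (c : Fin (k-1) → ZMod 2) (u : Fin n → ZMod 2) :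
    ∃ (MM sg : ℕ → ℤ), (∀ m, sg m = 1 ∨ sg m = -1) ∧
      gWHT (2^k) f u = ∑ m ∈ Finset.range (2^(k-1)), (MM m : ℂ) * (zetaQ (2^k))^m ∧
      bWHT (comp f c) u = ((∑ m ∈ Finset.range (2^(k-1)), MM m * sg m : ℤ) : ℂ) := by
  have hk1 : 1 ≤ k := by omega
  have hsplitC : ∀ (F : ℕ → ℂ), ∑ j ∈ Finset.range (2^k), F j
      = ∑ m ∈ Finset.range (2^(k-1)), F m
        + ∑ m ∈ Finset.range (2^(k-1)), F (2^(k-1) + m) := by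
    intro F
    rw [show Finset.range (2^k) = Finset.range (2^(k-1) + 2^(k-1)) from by
      rw [← two_pow_split hk1], Finset.sum_range_add]
  have hsplitZ : ∀ (F : ℕ → ℤ), ∑ j ∈ Finset.range (2^k), F j
      = ∑ m ∈ Finset.range (2^(k-1)), F m
        + ∑ m ∈ Finset.range (2^(k-1)), F (2^(k-1) + m) := by
    intro F
    rw [show Finset.range (2^k) = Finset.range (2^(k-1) + 2^(k-1)) from by
      rw [← two_pow_split hk1], Finset.sum_range_add]
  refine ⟨fun m => Nfun f u m - Nfun f u (2^(k-1) + m), fun m => sgn2 (Gfun k c m),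
    fun m => sgn2_cases _, ?_, ?_⟩
  · rw [E1 hk1 f u, hsplitC]
    have h2 : ∀ m : ℕ, ((Nfun f u (2^(k-1)+m) : ℤ) : ℂ) * zetaQ (2^k) ^ (2^(k-1) + m)
        = -(((Nfun f u (2^(k-1)+m) : ℤ):ℂ) * zetaQ (2^k)^m) := by
      intro m
      rw [pow_add, zeta_pow_half hk1]; ring
    rw [Finset.sum_congr rfl (fun m _ => h2 m), ← Finset.sum_add_distrib]
    refine Finset.sum_congr rfl (fun m _ => ?_)
    push_cast
    ring
  · rw [E2 hk1 f c u]
    refine congrArg _ ?_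
    rw [hsplitZ]
    have hflip : ∀ a : ZMod 2, sgn2 (a + 1) = - sgn2 a := by decide
    have h2 : ∀ m ∈ Finset.range (2^(k-1)),
        Nfun f u (2^(k-1)+m) * sgn2 (Gfun k c (2^(k-1)+m))
        = -(Nfun f u (2^(k-1)+m) * sgn2 (Gfun k c m)) := by
      intro m hm
      rw [G_flip hk c m (Finset.mem_range.1 hm), hflip]
      ring
    rw [Finset.sum_congr rfl h2, ← Finset.sum_add_distrib]
    exact Finset.sum_congr rfl (fun m hm => by ring)

end Reduce

lemma abs_pm_pow (εz : ℤ) (hεz : εz = 1 ∨ εz = -1) (q : ℕ) :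
    ‖(((εz * 2^q : ℤ) : ℂ))‖ = (2:ℝ)^q := by
  have h2 : ‖(2:ℂ)^q‖ = 2^q := by
    rw [norm_pow, Complex.norm_two]
  rcases hεz with rfl | rfl
  · push_cast
    rw [one_mul, h2]
  · push_cast
    rw [neg_one_mul, norm_neg, h2]

lemma rpow_sq (t : ℕ) : ((2:ℝ)^(((t:ℕ):ℝ)/2))^2 = (2:ℝ)^t := by
  rw [← Real.rpow_natCast ((2:ℝ)^(((t:ℕ):ℝ)/2)) 2, ← Real.rpow_mul (by norm_num)]
  have h : ((t:ℕ):ℝ)/2 * ((2:ℕ):ℝ) = ((t:ℕ):ℝ) := by push_cast; field_simp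
  rw [h, Real.rpow_natCast]

lemma rpow_half (t p : ℕ) (hp : t = p + p) : (2:ℝ)^(((t:ℕ):ℝ)/2) = 2^p := by
  have h : ((t:ℕ):ℝ)/2 = ((p:ℕ):ℝ) := by rw [hp]; push_cast; ring
  rw [h, Real.rpow_natCast]

/-- Corollary 6, one direction: if `f : 𝔽₂ⁿ → ℤ_{2^k}` is `s`-plateaued,
then every component `f_c` is `s`-plateaued if `n + s` is even, and `(s+1)`-plateaued
if `n + s` is odd. -/
theorem stmt7 (n k s : ℕ) (hn : 1 ≤ n) (hk : 2 ≤ k)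
    (f : (Fin n → ZMod 2) → ZMod (2 ^ k))
    (hf : ∀ u, ‖gWHT (2 ^ k) f u‖ = 0 ∨
      ‖gWHT (2 ^ k) f u‖ = (2 : ℝ) ^ (((n + s : ℕ) : ℝ) / 2)) :
    ∀ (c : Fin (k - 1) → ZMod 2) (u : Fin n → ZMod 2),
      (Even (n + s) →
        ‖bWHT (comp f c) u‖ = 0 ∨
        ‖bWHT (comp f c) u‖ = (2 : ℝ) ^ (((n + s : ℕ) : ℝ) / 2)) ∧
      (¬ Even (n + s) →
        ‖bWHT (comp f c) u‖ = 0 ∨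
        ‖bWHT (comp f c) u‖ = (2 : ℝ) ^ (((n + s + 1 : ℕ) : ℝ) / 2)) := by
  intro c u
  have hk1 : 1 ≤ k := by omega
  obtain ⟨MM, sg, hsg, hgW, hbW⟩ := reduce hk f c u
  rcases hf u with h0 | h2
  · -- the transform vanishes
    have hα0 : gWHT (2^k) f u = 0 := by
      rwa [norm_eq_zero] at h0
    have hMM0 : ∀ m < 2^(k-1), MM m = 0 := coords hk1 MM (by rw [← hgW]; exact hα0)
    have hW0 : (∑ m ∈ Finset.range (2^(k-1)), MM m * sg m) = 0 := by
      apply Finset.sum_eq_zero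
      intro m hm
      rw [hMM0 m (Finset.mem_range.1 hm), zero_mul]
    have habs : ‖bWHT (comp f c) u‖ = 0 := by
      rw [hbW, hW0]
      simp
    exact ⟨fun _ => Or.inl habs, fun _ => Or.inl habs⟩
  · have hAA : (∑ m ∈ Finset.range (2^(k-1)), (MM m:ℂ) * zetaQ (2^k) ^ m) *
        (starRingEnd ℂ) (∑ m ∈ Finset.range (2^(k-1)), (MM m:ℂ) * zetaQ (2^k) ^ m)
          = (2:ℂ)^(n+s) := by
      rw [← hgW, Complex.mul_conj]
      have h1 : Complex.normSq (gWHT (2^k) f u) = (2:ℝ)^(n+s) := by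
        rw [← Complex.sq_norm, h2, rpow_sq]
      rw [h1]
      push_cast
      ring
    rcases Nat.even_or_odd (n+s) with he | ho
    · obtain ⟨p, hp⟩ := he
      rw [hp] at hAA
      obtain ⟨εz, hεz, hWeq⟩ := even_case hk p MM sg hsg hAA
      have habs : ‖bWHT (comp f c) u‖ = (2:ℝ)^p := by
        rw [hbW, hWeq]
        exact abs_pm_pow εz hεz p
      refine ⟨fun _ => Or.inr ?_, fun hcon => absurd ⟨p, hp⟩ hcon⟩
      rw [habs, rpow_half (n+s) p hp]
    · obtain ⟨p, hp⟩ := ho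
      rw [show n + s = p + p + 1 from by omega] at hAA
      have hres := odd_case hk p MM sg hsg hAA
      refine ⟨fun hcon => ?_, fun _ => ?_⟩
      · exfalso
        rcases hcon with ⟨q, hq⟩
        omega
      · rcases hres with hW0 | ⟨εz, hεz, hWeq⟩
        · left
          rw [hbW, hW0]
          simp
        · right
          have habs : ‖bWHT (comp f c) u‖ = (2:ℝ)^(p+1) := by
            rw [hbW, hWeq]
            exact abs_pm_pow εz hεz (p+1)
          rw [habs, rpow_half (n+s+1) (p+1) (by omega)]

end
end
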